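/- Let 𝒫 ⊆ ℝ^q be nonempty with 𝒫 = 𝒫 + C for a polyhedral cone C with nonempty interior containing no lines, let c ∈ int C with c_q = 1, and let Z be the support function of −𝒫. Suppose w ∈ ℝ^q satisfies cᵀw > 0 and Z(w) < ∞. If 𝒟* denotes the set {v ∈ ℝ^q : −v_q ≥ Z(v_1,…,v_{q−1}, 1 − Σ_{i=1}^{q−1} c_i v_i)}, then Z(w) = − sup{ y ∈ ℝ : (1/cᵀw)(w_1,…,w_{q−1}, y) ∈ 𝒟* }. -/

import Mathlib

open Matrix Pointwise

/-- Support function of a set `A ⊆ ℝⁿ`, with values in the extended reals. -/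
noncomputable def suppF {n : ℕ} (A : Set (Fin n → ℝ)) (x : Fin n → ℝ) : EReal :=
  sSup ((fun z => ((x ⬝ᵥ z : ℝ) : EReal)) '' A)

/-- recovering the support function `Z` of `−𝒫` from the dual lower
image `𝒟* = {v : −v_q ≥ Z(v_1,…,v_{q−1}, 1 − Σ c_i v_i)}`: if `cᵀw > 0` and
`Z(w) < ∞`, then `Z(w) = −sup{y ∈ ℝ : (1/cᵀw)(w_1,…,w_{q−1},y) ∈ 𝒟*}`.
The value space has dimension `q + 1` (the paper's `q`). -/
theorem stmt2 (q : ℕ) (Pup C : Set (Fin (q + 1) → ℝ))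
    (hPne : Pup.Nonempty)
    (hCpoly : ∃ (k : ℕ) (v : Fin k → (Fin (q + 1) → ℝ)),
      C = {x | ∃ lam : Fin k → ℝ, (∀ i, 0 ≤ lam i) ∧ x = ∑ i, lam i • v i})
    (hCint : (interior C).Nonempty)
    (hClines : C ∩ (-C) = {0})
    (hPC : Pup + C = Pup)
    (c : Fin (q + 1) → ℝ) (hc : c ∈ interior C) (hcq : c (Fin.last q) = 1)
    (Z : (Fin (q + 1) → ℝ) → EReal) (hZ : Z = suppF (-Pup))
    (Dstar : Set (Fin (q + 1) → ℝ))
    (hD : Dstar = {v | Z (Fin.snoc (fun i : Fin q => v i.castSucc)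
        (1 - ∑ i : Fin q, c i.castSucc * v i.castSucc) : Fin (q + 1) → ℝ)
      ≤ ((-(v (Fin.last q)) : ℝ) : EReal)})
    (w : Fin (q + 1) → ℝ) (hcw : 0 < c ⬝ᵥ w) (hfin : Z w < ⊤) :
    Z w = -sSup ((fun y : ℝ => (y : EReal)) ''
      {y : ℝ | (c ⬝ᵥ w)⁻¹ •
        (Fin.snoc (fun i : Fin q => w i.castSucc) y : Fin (q + 1) → ℝ) ∈ Dstar}) := by
  have hcw0 : (c ⬝ᵥ w) ≠ 0 := ne_of_gt hcw
  have hinv : 0 < (c ⬝ᵥ w)⁻¹ := inv_pos.mpr hcw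
  -- Z w is a real number
  obtain ⟨p, hp⟩ := hPne
  have hmem : (-p) ∈ (-Pup) := by simpa using hp
  have hbot : ((w ⬝ᵥ (-p) : ℝ) : EReal) ≤ Z w := by
    rw [hZ]; exact le_sSup ⟨-p, hmem, rfl⟩
  have hZbot : Z w ≠ ⊥ := fun h => by simp [h] at hbot
  set r : ℝ := (Z w).toReal with hrdef
  have hr : Z w = (r : EReal) := (EReal.coe_toReal (ne_of_lt hfin) hZbot).symm
  -- the inner snoc equals (c⬝ᵥw)⁻¹ • w
  have hsum : (1 : ℝ) - ∑ i : Fin q, c i.castSucc *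
      ((c ⬝ᵥ w)⁻¹ * w i.castSucc) = (c ⬝ᵥ w)⁻¹ * w (Fin.last q) := by
    have hdot : c ⬝ᵥ w = (∑ i : Fin q, c i.castSucc * w i.castSucc)
        + c (Fin.last q) * w (Fin.last q) := by
      simp [dotProduct, Fin.sum_univ_castSucc]
    have h1 : ∑ i : Fin q, c i.castSucc * ((c ⬝ᵥ w)⁻¹ * w i.castSucc)
        = (c ⬝ᵥ w)⁻¹ * ∑ i : Fin q, c i.castSucc * w i.castSucc := by
      rw [Finset.mul_sum]; apply Finset.sum_congr rfl; intro i _; ring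
    rw [h1]
    have : (∑ i : Fin q, c i.castSucc * w i.castSucc)
        = c ⬝ᵥ w - w (Fin.last q) := by rw [hdot, hcq]; ring
    rw [this]
    field_simp
    ring
  have hsnoc : ∀ y : ℝ,
      (Fin.snoc (fun i : Fin q =>
          ((c ⬝ᵥ w)⁻¹ • (Fin.snoc (fun i : Fin q => w i.castSucc) y :
            Fin (q + 1) → ℝ)) i.castSucc)
        (1 - ∑ i : Fin q, c i.castSucc *
          ((c ⬝ᵥ w)⁻¹ • (Fin.snoc (fun i : Fin q => w i.castSucc) y :
            Fin (q + 1) → ℝ)) i.castSucc) : Fin (q + 1) → ℝ)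
      = (c ⬝ᵥ w)⁻¹ • w := by
    intro y
    funext j
    refine Fin.lastCases ?_ ?_ j
    · simp only [Fin.snoc_last, Pi.smul_apply, Fin.snoc_castSucc, smul_eq_mul]
      exact hsum
    · intro i
      simp [Fin.snoc_castSucc]
  -- rewrite the set
  have hset : {y : ℝ | (c ⬝ᵥ w)⁻¹ •
        (Fin.snoc (fun i : Fin q => w i.castSucc) y : Fin (q + 1) → ℝ) ∈ Dstar}
      = {y : ℝ | y ≤ -r} := by
    ext y
    simp only [Set.mem_setOf_eq, hD, hsnoc y]
    have hlast : ((c ⬝ᵥ w)⁻¹ • (Fin.snoc (fun i : Fin q => w i.castSucc) y :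
        Fin (q + 1) → ℝ)) (Fin.last q) = (c ⬝ᵥ w)⁻¹ * y := by
      simp [Fin.snoc_last]
    rw [hlast, hZ]
    unfold suppF
    rw [sSup_le_iff]
    have key : ∀ s : ℝ, (c ⬝ᵥ w)⁻¹ * s ≤ -((c ⬝ᵥ w)⁻¹ * y) ↔ s ≤ -y := by
      intro s
      rw [← mul_neg]
      exact mul_le_mul_iff_right₀ hinv
    constructor
    · intro h
      have hZle : Z w ≤ ((-y : ℝ) : EReal) := by
        rw [hZ]
        refine sSup_le ?_
        rintro b ⟨z, hz, rfl⟩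
        have h1 := h _ ⟨z, hz, rfl⟩
        simp only at h1
        rw [EReal.coe_le_coe_iff, smul_dotProduct, smul_eq_mul] at h1
        show ((w ⬝ᵥ z : ℝ) : EReal) ≤ ((-y : ℝ) : EReal)
        exact_mod_cast (key _).mp h1
      rw [hr, EReal.coe_le_coe_iff] at hZle
      linarith
    · intro hy
      rintro b ⟨z, hz, rfl⟩
      have hwz : ((w ⬝ᵥ z : ℝ) : EReal) ≤ Z w := by
        rw [hZ]; exact le_sSup ⟨z, hz, rfl⟩
      rw [hr, EReal.coe_le_coe_iff] at hwz
      show ((((c ⬝ᵥ w)⁻¹ • w) ⬝ᵥ z : ℝ) : EReal) ≤ ((-((c ⬝ᵥ w)⁻¹ * y) : ℝ) : EReal)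
      rw [smul_dotProduct, smul_eq_mul, EReal.coe_le_coe_iff]
      exact (key _).mpr (by linarith)
  rw [hset]
  have hsup : sSup ((fun y : ℝ => (y : EReal)) '' {y : ℝ | y ≤ -r})
      = ((-r : ℝ) : EReal) := by
    apply le_antisymm
    · refine sSup_le ?_
      rintro b ⟨y, hy, rfl⟩
      show ((y:ℝ):EReal) ≤ ((-r:ℝ):EReal)
      exact_mod_cast hy
    · exact le_sSup ⟨-r, by simp, rfl⟩
  rw [hsup, hr, ← EReal.coe_neg, neg_neg]
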